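/- Let n ≥ 1, σ > 0, x ∈ ℝⁿ and r > 0 with n·σ² < r². Then ∫_{B(x, r)} k_σ(x, x') dx' ≥ 1 − 2nσ⁴/(r² − nσ²)². -/

import Mathlib

open MeasureTheory Real

lemma my_int_pow {b : ℝ} (hb : 0 < b) (m : ℕ) :
    Integrable fun x : ℝ => x ^ m * Real.exp (-b * x ^ 2) := by
  have h := integrable_rpow_mul_exp_neg_mul_sq hb
    (s := (m : ℝ)) (lt_of_lt_of_le neg_one_lt_zero (Nat.cast_nonneg m))
  simpa [Real.rpow_natCast] using h

lemma my_moment_step {b : ℝ} (hb : 0 < b) (m : ℕ) :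
    ∫ x : ℝ, x ^ (m + 2) * Real.exp (-b * x ^ 2)
      = ((m : ℝ) + 1) / (2 * b) * ∫ x : ℝ, x ^ m * Real.exp (-b * x ^ 2) := by
  have hu : ∀ x : ℝ, HasDerivAt (fun x : ℝ => x ^ (m + 1))
      (((m : ℝ) + 1) * x ^ m) x := by
    intro x
    simpa using hasDerivAt_pow (m + 1) x
  have hv : ∀ x : ℝ, HasDerivAt (fun x : ℝ => -(2 * b)⁻¹ * Real.exp (-b * x ^ 2))
      (x * Real.exp (-b * x ^ 2)) x := by
    intro x
    have h1 : HasDerivAt (fun x : ℝ => -b * x ^ 2) (-b * (2 * x)) x := by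
      simpa [mul_comm] using (hasDerivAt_pow 2 x).const_mul (-b)
    have h2 := h1.exp.const_mul (-(2 * b)⁻¹)
    refine h2.congr_deriv ?_
    field_simp
  have huv' : Integrable ((fun x : ℝ => x ^ (m + 1)) *
      fun x : ℝ => x * Real.exp (-b * x ^ 2)) := by
    have := my_int_pow hb (m + 2)
    apply this.congr
    filter_upwards with x
    simp [Pi.mul_apply]
    ring
  have hu'v : Integrable ((fun x : ℝ => ((m : ℝ) + 1) * x ^ m) *
      fun x : ℝ => -(2 * b)⁻¹ * Real.exp (-b * x ^ 2)) := by
    have := ((my_int_pow hb m).const_mul (((m : ℝ) + 1) * -(2 * b)⁻¹))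
    apply this.congr
    filter_upwards with x
    simp [Pi.mul_apply]
    ring
  have huv : Integrable ((fun x : ℝ => x ^ (m + 1)) *
      fun x : ℝ => -(2 * b)⁻¹ * Real.exp (-b * x ^ 2)) := by
    have := ((my_int_pow hb (m + 1)).const_mul (-(2 * b)⁻¹))
    apply this.congr
    filter_upwards with x
    simp [Pi.mul_apply]
    ring
  have key := MeasureTheory.integral_mul_deriv_eq_deriv_mul_of_integrable (fun x _ => hu x) (fun x _ => hv x) huv' hu'v huv
  have e1 : ∫ x : ℝ, x ^ (m + 1) * (x * Real.exp (-b * x ^ 2))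
      = ∫ x : ℝ, x ^ (m + 2) * Real.exp (-b * x ^ 2) := by
    congr 1; funext x; ring
  rw [e1] at key
  rw [key]
  rw [← integral_neg]
  rw [show (fun x : ℝ => -(((m : ℝ) + 1) * x ^ m * (-(2 * b)⁻¹ * Real.exp (-b * x ^ 2))))
      = fun x : ℝ => ((m : ℝ) + 1) / (2 * b) * (x ^ m * Real.exp (-b * x ^ 2)) by
    funext x; field_simp]
  rw [integral_const_mul]

section
variable {σ : ℝ} (hσ : 0 < σ)

noncomputable def myphi (σ : ℝ) (t : ℝ) : ℝ :=
  (2 * π * σ ^ 2) ^ (-(1:ℝ)/2) * Real.exp (-(2 * σ ^ 2)⁻¹ * t ^ 2)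

lemma myphi_nonneg (σ t : ℝ) : 0 ≤ myphi σ t := by
  unfold myphi; positivity

include hσ

lemma my_b_pos : 0 < (2 * σ ^ 2)⁻¹ := by positivity

lemma my_gauss0 : ∫ x : ℝ, Real.exp (-(2 * σ ^ 2)⁻¹ * x ^ 2) = √(2 * π * σ ^ 2) := by
  rw [integral_gaussian]
  congr 1
  field_simp

lemma myphi_integrable : Integrable (myphi σ) := by
  unfold myphi
  exact (integrable_exp_neg_mul_sq (my_b_pos hσ)).const_mul _

lemma myphi_int_pow (m : ℕ) : Integrable (fun t : ℝ => t ^ m * myphi σ t) := by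
  unfold myphi
  have := (my_int_pow (my_b_pos hσ) m).const_mul ((2 * π * σ ^ 2) ^ (-(1:ℝ)/2))
  apply this.congr
  filter_upwards with x
  ring

lemma my_const_mul_sqrt : (2 * π * σ ^ 2) ^ (-(1:ℝ)/2) * √(2 * π * σ ^ 2) = 1 := by
  have hpos : 0 < 2 * π * σ ^ 2 := by positivity
  rw [sqrt_eq_rpow, ← Real.rpow_add hpos]
  norm_num

lemma myphi_integral : ∫ t : ℝ, myphi σ t = 1 := by
  unfold myphi
  rw [integral_const_mul, my_gauss0 hσ, my_const_mul_sqrt hσ]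

lemma myphi_moment2 : ∫ t : ℝ, t ^ 2 * myphi σ t = σ ^ 2 := by
  unfold myphi
  have e : ∀ t : ℝ, t ^ 2 * ((2 * π * σ ^ 2) ^ (-(1:ℝ)/2) * Real.exp (-(2 * σ ^ 2)⁻¹ * t ^ 2))
      = (2 * π * σ ^ 2) ^ (-(1:ℝ)/2) * (t ^ 2 * Real.exp (-(2 * σ ^ 2)⁻¹ * t ^ 2)) :=
    fun t => by ring
  simp_rw [e]
  rw [integral_const_mul]
  have h2 := my_moment_step (my_b_pos hσ) 0
  simp only [pow_zero, one_mul, zero_add, Nat.cast_zero] at h2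
  rw [h2, my_gauss0 hσ]
  have hc : (1:ℝ) / (2 * (2 * σ ^ 2)⁻¹) = σ ^ 2 := by
    field_simp
  rw [hc]
  have := my_const_mul_sqrt hσ
  linear_combination σ ^ 2 * this

lemma myphi_moment4 : ∫ t : ℝ, t ^ 4 * myphi σ t = 3 * σ ^ 4 := by
  unfold myphi
  have e : ∀ t : ℝ, t ^ 4 * ((2 * π * σ ^ 2) ^ (-(1:ℝ)/2) * Real.exp (-(2 * σ ^ 2)⁻¹ * t ^ 2))
      = (2 * π * σ ^ 2) ^ (-(1:ℝ)/2) * (t ^ 4 * Real.exp (-(2 * σ ^ 2)⁻¹ * t ^ 2)) :=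
    fun t => by ring
  simp_rw [e]
  rw [integral_const_mul]
  have h4 := my_moment_step (my_b_pos hσ) 2
  have h2 := my_moment_step (my_b_pos hσ) 0
  simp only [pow_zero, one_mul, zero_add, Nat.cast_zero] at h2
  rw [show (2:ℕ) + 2 = 4 from rfl] at h4
  rw [h4, h2, my_gauss0 hσ]
  have hc1 : (((2:ℕ):ℝ) + 1) / (2 * (2 * σ ^ 2)⁻¹) = 3 * σ ^ 2 := by
    push_cast; field_simp; ring
  have hc2 : (1:ℝ) / (2 * (2 * σ ^ 2)⁻¹) = σ ^ 2 := by field_simp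
  rw [hc1, hc2]
  have := my_const_mul_sqrt hσ
  linear_combination (3 * σ ^ 4) * this

end

/-! ### Pi-space lemmas -/

section PiSide
variable {n : ℕ} {σ : ℝ} (hσ : 0 < σ)

noncomputable def myW (n : ℕ) (σ : ℝ) (v : Fin n → ℝ) : ℝ := ∏ k, myphi σ (v k)

lemma myW_nonneg (n : ℕ) (σ : ℝ) (v : Fin n → ℝ) : 0 ≤ myW n σ v :=
  Finset.prod_nonneg fun k _ => myphi_nonneg σ (v k)

noncomputable def myH (σ : ℝ) {n : ℕ} (i j : Fin n) (k : Fin n) (t : ℝ) : ℝ :=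
  (if k = i then t ^ 2 else 1) * ((if k = j then t ^ 2 else 1) * myphi σ t)

noncomputable def myG (σ : ℝ) {n : ℕ} (i : Fin n) (k : Fin n) (t : ℝ) : ℝ :=
  (if k = i then t ^ 2 else 1) * myphi σ t

lemma myH_prod (i j : Fin n) (v : Fin n → ℝ) :
    v i ^ 2 * (v j ^ 2 * myW n σ v) = ∏ k, myH σ i j k (v k) := by
  unfold myW myH
  rw [Finset.prod_mul_distrib, Finset.prod_mul_distrib]
  rw [Finset.prod_ite_eq' Finset.univ i (fun k => (v k) ^ 2),
      Finset.prod_ite_eq' Finset.univ j (fun k => (v k) ^ 2)]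
  simp

lemma myG_prod (i : Fin n) (v : Fin n → ℝ) :
    v i ^ 2 * myW n σ v = ∏ k, myG σ i k (v k) := by
  unfold myW myG
  rw [Finset.prod_mul_distrib]
  rw [Finset.prod_ite_eq' Finset.univ i (fun k => (v k) ^ 2)]
  simp

include hσ

lemma myW_integrable : Integrable (myW n σ) :=
  Integrable.fintype_prod (f := fun _ t => myphi σ t) (fun _ => myphi_integrable hσ)

lemma myW_integral : ∫ v : Fin n → ℝ, myW n σ v = 1 := by
  unfold myW
  rw [integral_fintype_prod_volume_eq_prod (f := fun _ t => myphi σ t)]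
  rw [myphi_integral hσ]
  simp

lemma myH_integrable (i j k : Fin n) : Integrable (myH σ i j k) := by
  unfold myH
  rcases eq_or_ne k i with hi | hi
  · rcases eq_or_ne k j with hj | hj
    · simp only [if_pos hi, if_pos hj]
      apply (myphi_int_pow hσ 4).congr
      filter_upwards with t
      ring
    · simp only [if_pos hi, if_neg hj, one_mul]
      exact myphi_int_pow hσ 2
  · rcases eq_or_ne k j with hj | hj
    · simp only [if_neg hi, if_pos hj, one_mul]
      exact myphi_int_pow hσ 2
    · simp only [if_neg hi, if_neg hj, one_mul]
      exact myphi_integrable hσ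

lemma myG_integrable (i k : Fin n) : Integrable (myG σ i k) := by
  unfold myG
  rcases eq_or_ne k i with hi | hi
  · simp only [if_pos hi]
    exact myphi_int_pow hσ 2
  · simp only [if_neg hi, one_mul]
    exact myphi_integrable hσ

lemma myH_integral (i j k : Fin n) :
    ∫ t : ℝ, myH σ i j k t
      = if k = i then (if k = j then 3 * σ ^ 4 else σ ^ 2)
        else (if k = j then σ ^ 2 else 1) := by
  unfold myH
  rcases eq_or_ne k i with hi | hi
  · rcases eq_or_ne k j with hj | hj
    · simp only [if_pos hi, if_pos hj]
      rw [show (fun t : ℝ => t ^ 2 * (t ^ 2 * myphi σ t)) = fun t : ℝ => t ^ 4 * myphi σ t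
        from funext fun t => by ring]
      exact myphi_moment4 hσ
    · simp only [if_pos hi, if_neg hj, one_mul]
      exact myphi_moment2 hσ
  · rcases eq_or_ne k j with hj | hj
    · simp only [if_neg hi, if_pos hj, one_mul]
      exact myphi_moment2 hσ
    · simp only [if_neg hi, if_neg hj, one_mul]
      exact myphi_integral hσ

lemma myG_integral (i k : Fin n) :
    ∫ t : ℝ, myG σ i k t = if k = i then σ ^ 2 else 1 := by
  unfold myG
  rcases eq_or_ne k i with hi | hi
  · simp only [if_pos hi]
    exact myphi_moment2 hσ
  · simp only [if_neg hi, one_mul]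
    exact myphi_integral hσ

lemma my_term4_integrable (i j : Fin n) :
    Integrable (fun v : Fin n → ℝ => v i ^ 2 * (v j ^ 2 * myW n σ v)) := by
  rw [show (fun v : Fin n → ℝ => v i ^ 2 * (v j ^ 2 * myW n σ v))
      = fun v => ∏ k, myH σ i j k (v k) from funext fun v => myH_prod i j v]
  exact Integrable.fintype_prod (fun k => myH_integrable hσ i j k)

lemma my_term2_integrable (i : Fin n) :
    Integrable (fun v : Fin n → ℝ => v i ^ 2 * myW n σ v) := by
  rw [show (fun v : Fin n → ℝ => v i ^ 2 * myW n σ v)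
      = fun v => ∏ k, myG σ i k (v k) from funext fun v => myG_prod i v]
  exact Integrable.fintype_prod (fun k => myG_integrable hσ i k)

lemma my_term4_integral (i j : Fin n) :
    ∫ v : Fin n → ℝ, v i ^ 2 * (v j ^ 2 * myW n σ v)
      = if i = j then 3 * σ ^ 4 else σ ^ 4 := by
  rw [show (fun v : Fin n → ℝ => v i ^ 2 * (v j ^ 2 * myW n σ v))
      = fun v => ∏ k, myH σ i j k (v k) from funext fun v => myH_prod i j v]
  rw [integral_fintype_prod_volume_eq_prod (f := fun k => myH σ i j k)]
  simp_rw [myH_integral hσ i j]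
  rcases eq_or_ne i j with hij | hij
  · subst hij
    rw [show (fun k => if k = i then (if k = i then 3 * σ ^ 4 else σ ^ 2)
        else (if k = i then σ ^ 2 else 1))
        = fun k => if k = i then 3 * σ ^ 4 else 1 from
      funext fun k => by rcases eq_or_ne k i with h | h <;> simp [h]]
    rw [Finset.prod_ite_eq' Finset.univ i (fun _ => 3 * σ ^ 4)]
    simp
  · rw [show (fun k => if k = i then (if k = j then 3 * σ ^ 4 else σ ^ 2)
        else (if k = j then σ ^ 2 else 1))
        = fun k => (if k = i then σ ^ 2 else 1) * (if k = j then σ ^ 2 else 1) from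
      funext fun k => by
        rcases eq_or_ne k i with h1 | h1 <;> rcases eq_or_ne k j with h2 | h2
        · exact absurd (h1 ▸ h2) hij
        · simp [h1, h2, hij]
        · simp [h1, h2, Ne.symm hij]
        · simp [h1, h2]]
    rw [Finset.prod_mul_distrib,
      Finset.prod_ite_eq' Finset.univ i (fun _ => σ ^ 2),
      Finset.prod_ite_eq' Finset.univ j (fun _ => σ ^ 2)]
    simp [if_neg hij]
    ring

lemma my_term2_integral (i : Fin n) :
    ∫ v : Fin n → ℝ, v i ^ 2 * myW n σ v = σ ^ 2 := by
  rw [show (fun v : Fin n → ℝ => v i ^ 2 * myW n σ v)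
      = fun v => ∏ k, myG σ i k (v k) from funext fun v => myG_prod i v]
  rw [integral_fintype_prod_volume_eq_prod (f := fun k => myG σ i k)]
  simp_rw [myG_integral hσ i]
  rw [Finset.prod_ite_eq' Finset.univ i (fun _ => σ ^ 2)]
  simp

lemma my_S2_integrable :
    Integrable (fun v : Fin n → ℝ => (∑ k, v k ^ 2) * myW n σ v) := by
  rw [show (fun v : Fin n → ℝ => (∑ k, v k ^ 2) * myW n σ v)
      = fun v => ∑ i, v i ^ 2 * myW n σ v from funext fun v => by rw [Finset.sum_mul]]
  exact integrable_finset_sum _ fun i _ => my_term2_integrable hσ i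

lemma my_S2_integral :
    ∫ v : Fin n → ℝ, (∑ k, v k ^ 2) * myW n σ v = n * σ ^ 2 := by
  rw [show (fun v : Fin n → ℝ => (∑ k, v k ^ 2) * myW n σ v)
      = fun v => ∑ i, v i ^ 2 * myW n σ v from funext fun v => by rw [Finset.sum_mul]]
  rw [integral_finset_sum _ fun i _ => my_term2_integrable hσ i]
  simp_rw [my_term2_integral hσ]
  simp [mul_comm]

omit hσ in
lemma my_S4_expand (v : Fin n → ℝ) :
    (∑ k, v k ^ 2) ^ 2 * myW n σ v = ∑ i, ∑ j, v i ^ 2 * (v j ^ 2 * myW n σ v) := by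
  rw [sq, Finset.sum_mul_sum, Finset.sum_mul]
  exact Finset.sum_congr rfl fun i _ => by
    rw [Finset.sum_mul]
    exact Finset.sum_congr rfl fun j _ => by ring

lemma my_S4_integrable :
    Integrable (fun v : Fin n → ℝ => (∑ k, v k ^ 2) ^ 2 * myW n σ v) := by
  rw [show (fun v : Fin n → ℝ => (∑ k, v k ^ 2) ^ 2 * myW n σ v)
      = fun v => ∑ i, ∑ j, v i ^ 2 * (v j ^ 2 * myW n σ v)
      from funext fun v => my_S4_expand v]
  exact integrable_finset_sum _ fun i _ =>
    integrable_finset_sum _ fun j _ => my_term4_integrable hσ i j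

lemma my_S4_integral :
    ∫ v : Fin n → ℝ, (∑ k, v k ^ 2) ^ 2 * myW n σ v
      = (n : ℝ) ^ 2 * σ ^ 4 + 2 * n * σ ^ 4 := by
  rw [show (fun v : Fin n → ℝ => (∑ k, v k ^ 2) ^ 2 * myW n σ v)
      = fun v => ∑ i, ∑ j, v i ^ 2 * (v j ^ 2 * myW n σ v)
      from funext fun v => my_S4_expand v]
  rw [integral_finset_sum _ fun i _ =>
    integrable_finset_sum _ fun j _ => my_term4_integrable hσ i j]
  have : ∀ i : Fin n, ∫ v : Fin n → ℝ, ∑ j, v i ^ 2 * (v j ^ 2 * myW n σ v)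
      = (n : ℝ) * σ ^ 4 + 2 * σ ^ 4 := by
    intro i
    rw [integral_finset_sum _ fun j _ => my_term4_integrable hσ i j]
    simp_rw [my_term4_integral hσ i]
    rw [show (fun j => if i = j then 3 * σ ^ 4 else σ ^ 4)
        = fun j => σ ^ 4 + (if i = j then 2 * σ ^ 4 else 0) from
      funext fun j => by rcases eq_or_ne i j with h | h <;> simp [h] <;> ring]
    rw [Finset.sum_add_distrib, Finset.sum_ite_eq Finset.univ i (fun _ => 2 * σ ^ 4)]
    simp [mul_comm]
  simp_rw [this]
  simp
  ring

/-- The key Chebyshev second moment. -/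
lemma my_key_integrable :
    Integrable (fun v : Fin n → ℝ => ((∑ k, v k ^ 2) - n * σ ^ 2) ^ 2 * myW n σ v) := by
  have e : (fun v : Fin n → ℝ => ((∑ k, v k ^ 2) - n * σ ^ 2) ^ 2 * myW n σ v)
      = fun v => ((∑ k, v k ^ 2) ^ 2 * myW n σ v
          - (2 * (n * σ ^ 2)) * ((∑ k, v k ^ 2) * myW n σ v))
          + (n * σ ^ 2) ^ 2 * myW n σ v := funext fun v => by ring
  rw [e]
  exact ((my_S4_integrable hσ).sub ((my_S2_integrable hσ).const_mul _)).add
    ((myW_integrable hσ).const_mul _)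

lemma my_key_integral :
    ∫ v : Fin n → ℝ, ((∑ k, v k ^ 2) - n * σ ^ 2) ^ 2 * myW n σ v
      = 2 * n * σ ^ 4 := by
  have e : (fun v : Fin n → ℝ => ((∑ k, v k ^ 2) - n * σ ^ 2) ^ 2 * myW n σ v)
      = fun v => ((∑ k, v k ^ 2) ^ 2 * myW n σ v
          - (2 * (n * σ ^ 2)) * ((∑ k, v k ^ 2) * myW n σ v))
          + (n * σ ^ 2) ^ 2 * myW n σ v := funext fun v => by ring
  rw [e]
  have h2' : Integrable (fun v : Fin n → ℝ =>
      (2 * ((n : ℝ) * σ ^ 2)) * ((∑ k, v k ^ 2) * myW n σ v)) :=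
    (my_S2_integrable hσ).const_mul _
  have h0' : Integrable (fun v : Fin n → ℝ => ((n : ℝ) * σ ^ 2) ^ 2 * myW n σ v) :=
    (myW_integrable hσ).const_mul _
  have hsub : Integrable (fun v : Fin n → ℝ =>
      (∑ k, v k ^ 2) ^ 2 * myW n σ v
        - (2 * ((n : ℝ) * σ ^ 2)) * ((∑ k, v k ^ 2) * myW n σ v)) :=
    (my_S4_integrable hσ).sub h2'
  rw [integral_add hsub h0', integral_sub (my_S4_integrable hσ) h2',
    integral_const_mul, integral_const_mul,
    my_S4_integral hσ, my_S2_integral hσ, myW_integral hσ]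
  ring

end PiSide

section ESide
variable {n : ℕ} {σ : ℝ}

lemma my_normsq (y : EuclideanSpace ℝ (Fin n)) : ‖y‖ ^ 2 = ∑ k, y k ^ 2 := by
  rw [EuclideanSpace.norm_eq, Real.sq_sqrt (by positivity)]
  simp [sq_abs]

lemma my_transfer_integral (g : (Fin n → ℝ) → ℝ) :
    ∫ y : EuclideanSpace ℝ (Fin n), g (fun k => y k) = ∫ v : Fin n → ℝ, g v := by
  have h := EuclideanSpace.volume_preserving_symm_measurableEquiv_toLp (Fin n)
  rw [← h.integral_comp (MeasurableEquiv.measurableEmbedding _)]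
  rfl

lemma my_transfer_integrable (g : (Fin n → ℝ) → ℝ) (hg : Integrable g) :
    Integrable (fun y : EuclideanSpace ℝ (Fin n) => g (fun k => y k)) := by
  have h := EuclideanSpace.volume_preserving_symm_measurableEquiv_toLp (Fin n)
  exact (h.integrable_comp_emb (MeasurableEquiv.measurableEmbedding _)).2 hg

lemma myW_eq (hσ : 0 < σ) (y : EuclideanSpace ℝ (Fin n)) :
    (2 * π * σ ^ 2) ^ (-(n : ℝ)/2) * Real.exp (-‖y‖ ^ 2 / (2 * σ ^ 2))
      = myW n σ (fun k => y k) := by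
  unfold myW myphi
  rw [Finset.prod_mul_distrib, Finset.prod_const, ← Real.exp_sum]
  have h1 : ((2 * π * σ ^ 2) ^ (-(1:ℝ)/2)) ^ (Finset.univ : Finset (Fin n)).card
      = (2 * π * σ ^ 2) ^ (-(n : ℝ)/2) := by
    rw [Finset.card_univ, Fintype.card_fin,
      ← Real.rpow_natCast ((2 * π * σ ^ 2) ^ (-(1:ℝ)/2)) n,
      ← Real.rpow_mul (by positivity)]
    congr 1
    push_cast
    ring
  rw [h1]
  congr 1
  rw [my_normsq, ← Finset.mul_sum]
  ring

end ESide

theorem gaussian_ball_mass_lower_bound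
    (n : ℕ) (hn : 1 ≤ n) (σ : ℝ) (hσ : 0 < σ)
    (x : EuclideanSpace ℝ (Fin n)) (r : ℝ) (hr : 0 < r)
    (h : (n : ℝ) * σ ^ 2 < r ^ 2) :
    1 - 2 * n * σ ^ 4 / (r ^ 2 - n * σ ^ 2) ^ 2 ≤
      ∫ x' in Metric.ball x r,
        (2 * π * σ ^ 2) ^ (-(n : ℝ) / 2) * Real.exp (-‖x - x'‖ ^ 2 / (2 * σ ^ 2)) := by
  have hBpos : (0:ℝ) < r ^ 2 - n * σ ^ 2 := by linarith
  -- Step 1: translate to a ball centered at the origin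
  have htrans : ∫ x' in Metric.ball x r,
        (2 * π * σ ^ 2) ^ (-(n : ℝ) / 2) * Real.exp (-‖x - x'‖ ^ 2 / (2 * σ ^ 2))
      = ∫ y in Metric.ball (0 : EuclideanSpace ℝ (Fin n)) r, myW n σ (fun k => y k) := by
    have hmp : MeasurePreserving (fun y : EuclideanSpace ℝ (Fin n) => x - y)
        volume volume := Measure.measurePreserving_sub_left volume x
    have hemb : MeasurableEmbedding (fun y : EuclideanSpace ℝ (Fin n) => x - y) :=
      (Homeomorph.subLeft x).measurableEmbedding
    have hpre : (fun y : EuclideanSpace ℝ (Fin n) => x - y) ⁻¹' (Metric.ball x r)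
        = Metric.ball 0 r := by
      ext y
      simp only [Set.mem_preimage, Metric.mem_ball, dist_eq_norm, sub_zero]
      rw [show x - y - x = -y by abel, norm_neg]
    have hkey := hmp.setIntegral_preimage_emb hemb
      (fun x' => (2 * π * σ ^ 2) ^ (-(n : ℝ) / 2)
        * Real.exp (-‖x - x'‖ ^ 2 / (2 * σ ^ 2))) (Metric.ball x r)
    rw [hpre] at hkey
    rw [← hkey]
    refine setIntegral_congr_fun measurableSet_ball fun y _ => ?_
    rw [show x - (x - y) = y by abel]
    exact myW_eq hσ y
  rw [htrans]
  -- notation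
  set a : ℝ := (n : ℝ) * σ ^ 2 with ha
  -- E-side facts
  have hWE : Integrable (fun y : EuclideanSpace ℝ (Fin n) => myW n σ (fun k => y k)) :=
    my_transfer_integrable _ (myW_integrable hσ)
  have hWEint : ∫ y : EuclideanSpace ℝ (Fin n), myW n σ (fun k => y k) = 1 :=
    (my_transfer_integral _).trans (myW_integral hσ)
  have hkeyE : Integrable (fun y : EuclideanSpace ℝ (Fin n) =>
      (‖y‖ ^ 2 - a) ^ 2 * myW n σ (fun k => y k)) := by
    have h2 := my_transfer_integrable
      (fun v : Fin n → ℝ => ((∑ k, v k ^ 2) - a) ^ 2 * myW n σ v) (my_key_integrable hσ)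
    apply h2.congr
    filter_upwards with y
    rw [my_normsq]
  have hkeyEint : ∫ y : EuclideanSpace ℝ (Fin n),
      (‖y‖ ^ 2 - a) ^ 2 * myW n σ (fun k => y k) = 2 * n * σ ^ 4 := by
    rw [show (fun y : EuclideanSpace ℝ (Fin n) =>
        (‖y‖ ^ 2 - a) ^ 2 * myW n σ (fun k => y k))
        = fun y => ((∑ k, y k ^ 2) - a) ^ 2 * myW n σ (fun k => y k)
      from funext fun y => by rw [my_normsq]]
    exact (my_transfer_integral
      (fun v : Fin n → ℝ => ((∑ k, v k ^ 2) - a) ^ 2 * myW n σ v)).trans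
      (my_key_integral hσ)
  -- Chebyshev bound on complement
  have hq : Integrable (fun y : EuclideanSpace ℝ (Fin n) =>
      ((‖y‖ ^ 2 - a) / (r ^ 2 - a)) ^ 2 * myW n σ (fun k => y k)) := by
    have h2 := hkeyE.const_mul (((r ^ 2 - a) ^ 2)⁻¹)
    apply h2.congr
    filter_upwards with y
    rw [div_pow]
    field_simp
  have hqnonneg : ∀ y : EuclideanSpace ℝ (Fin n),
      0 ≤ ((‖y‖ ^ 2 - a) / (r ^ 2 - a)) ^ 2 * myW n σ (fun k => y k) :=
    fun y => mul_nonneg (sq_nonneg _) (myW_nonneg _ _ _)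
  have hqint : ∫ y : EuclideanSpace ℝ (Fin n),
      ((‖y‖ ^ 2 - a) / (r ^ 2 - a)) ^ 2 * myW n σ (fun k => y k)
      = 2 * n * σ ^ 4 / (r ^ 2 - a) ^ 2 := by
    rw [show (fun y : EuclideanSpace ℝ (Fin n) =>
        ((‖y‖ ^ 2 - a) / (r ^ 2 - a)) ^ 2 * myW n σ (fun k => y k))
        = fun y => ((r ^ 2 - a) ^ 2)⁻¹ * ((‖y‖ ^ 2 - a) ^ 2 * myW n σ (fun k => y k))
      from funext fun y => by rw [div_pow]; field_simp]
    rw [integral_const_mul, hkeyEint]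
    field_simp
  have hcomp : ∫ y in (Metric.ball (0 : EuclideanSpace ℝ (Fin n)) r)ᶜ,
      myW n σ (fun k => y k) ≤ 2 * n * σ ^ 4 / (r ^ 2 - a) ^ 2 := by
    have h1 : ∫ y in (Metric.ball (0 : EuclideanSpace ℝ (Fin n)) r)ᶜ,
        myW n σ (fun k => y k)
        ≤ ∫ y in (Metric.ball (0 : EuclideanSpace ℝ (Fin n)) r)ᶜ,
          ((‖y‖ ^ 2 - a) / (r ^ 2 - a)) ^ 2 * myW n σ (fun k => y k) := by
      refine setIntegral_mono_on hWE.integrableOn hq.integrableOn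
        measurableSet_ball.compl fun y hy => ?_
      have hyr : r ≤ ‖y‖ := by
        simp only [Set.mem_compl_iff, Metric.mem_ball, dist_eq_norm, sub_zero, not_lt] at hy
        exact hy
      have h2 : r ^ 2 - a ≤ ‖y‖ ^ 2 - a := by nlinarith
      have h3 : (1:ℝ) ≤ (‖y‖ ^ 2 - a) / (r ^ 2 - a) := (one_le_div hBpos).2 h2
      calc myW n σ (fun k => y k) = 1 * myW n σ (fun k => y k) := (one_mul _).symm
        _ ≤ ((‖y‖ ^ 2 - a) / (r ^ 2 - a)) ^ 2 * myW n σ (fun k => y k) :=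
          mul_le_mul_of_nonneg_right (by nlinarith) (myW_nonneg _ _ _)
    have h2 : ∫ y in (Metric.ball (0 : EuclideanSpace ℝ (Fin n)) r)ᶜ,
        ((‖y‖ ^ 2 - a) / (r ^ 2 - a)) ^ 2 * myW n σ (fun k => y k)
        ≤ ∫ y : EuclideanSpace ℝ (Fin n),
          ((‖y‖ ^ 2 - a) / (r ^ 2 - a)) ^ 2 * myW n σ (fun k => y k) :=
      setIntegral_le_integral hq (Filter.Eventually.of_forall hqnonneg)
    rw [hqint] at h2
    linarith
  have hsplit := integral_add_compl
    (measurableSet_ball (x := (0 : EuclideanSpace ℝ (Fin n))) (ε := r)) hWE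
  rw [hWEint] at hsplit
  linarith
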